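/- Let n ≥ 2, let F : ℝ^{n+1} → ℝ be continuously differentiable, and let x ∈ ℝ^{n+1} satisfy F(x) = 0, |x| < 1, ∇F(x) ≠ 0 and d := x·∇F(x) − ∂_{x_{n+1}}F(x) ≠ 0. Let H = {y ∈ ℝ^{n+1} : y·∇F(x) = x·∇F(x)} be the tangent hyperplane to the level set {F = 0} at x. Then |∇F(x)|² − (x·∇F(x))² > 0, H ∩ S^n does not contain e_{n+1}, and Λ(H ∩ S^n) is the (n−1)-dimensional sphere in ℝ^n with center (∂_{x₁}F(x), …, ∂_{x_n}F(x))/d and radius √(|∇F(x)|² − (x·∇F(x))²)/|d|. -/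

import Mathlib

open MeasureTheory RealInnerProductSpace

lemma esp_norm_sq {m : ℕ} (v : EuclideanSpace ℝ (Fin m)) : ‖v‖^2 = ∑ i, v i ^ 2 := by
  rw [EuclideanSpace.norm_eq, Real.sq_sqrt (by positivity)]
  simp [Real.norm_eq_abs, sq_abs]


/-- The stereographic projection `Λ` from the unit sphere in `ℝ^{n+1}` (minus the north pole)
to `ℝ^n`, given by `Λ(x) = (x₁/(1 - x_{n+1}), …, x_n/(1 - x_{n+1}))`. -/
noncomputable def stereo (n : ℕ) (x : EuclideanSpace ℝ (Fin (n + 1))) :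
    EuclideanSpace ℝ (Fin n) :=
  WithLp.toLp 2 fun i => x i.castSucc / (1 - x (Fin.last n))

/-- The north pole `e_{n+1} = (0, …, 0, 1)`. -/
noncomputable def northPole (n : ℕ) : EuclideanSpace ℝ (Fin (n + 1)) :=
  EuclideanSpace.single (Fin.last n) 1

/-- The center `(∂₁F(x), …, ∂ₙF(x)) / d` with `d = x·∇F(x) − ∂_{n+1}F(x)` of the stereographic
image of the circle cut from `Sⁿ` by the tangent hyperplane to `{F = 0}` at `x`. -/
noncomputable def surfaceMapCenter (n : ℕ) (F : EuclideanSpace ℝ (Fin (n + 1)) → ℝ)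
    (x : EuclideanSpace ℝ (Fin (n + 1))) : EuclideanSpace ℝ (Fin n) :=
  WithLp.toLp 2 fun i =>
    gradient F x i.castSucc /
      (∑ j, x j * gradient F x j - gradient F x (Fin.last n))

/-- Explicit form of the surface map: for a `C¹` level hypersurface `{F = 0}` inside the unit
sphere, at a point `x` with `∇F(x) ≠ 0` and `d = x·∇F(x) − ∂_{n+1}F(x) ≠ 0`, one has
`|∇F(x)|² − (x·∇F(x))² > 0`, the tangent hyperplane `H` cuts `Sⁿ` in a subsphere avoiding the
north pole, and `Λ(H ∩ Sⁿ)` is the sphere with center `(∂₁F(x),…,∂ₙF(x))/d` and radius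
`√(|∇F(x)|² − (x·∇F(x))²)/|d|`. -/
theorem stmt3 (n : ℕ) (hn : 2 ≤ n) (F : EuclideanSpace ℝ (Fin (n + 1)) → ℝ)
    (hF : ContDiff ℝ 1 F) (x : EuclideanSpace ℝ (Fin (n + 1)))
    (hx0 : F x = 0) (hx1 : ‖x‖ < 1) (hgrad : gradient F x ≠ 0)
    (hd : ∑ j, x j * gradient F x j - gradient F x (Fin.last n) ≠ 0) :
    0 < ‖gradient F x‖ ^ 2 - (∑ j, x j * gradient F x j) ^ 2 ∧
    northPole n ∉
      {y : EuclideanSpace ℝ (Fin (n + 1)) |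
          ∑ j, y j * gradient F x j = ∑ j, x j * gradient F x j} ∩
        {y | ‖y‖ = 1} ∧
    stereo n ''
        ({y : EuclideanSpace ℝ (Fin (n + 1)) |
            ∑ j, y j * gradient F x j = ∑ j, x j * gradient F x j} ∩
          {y | ‖y‖ = 1}) =
      {y : EuclideanSpace ℝ (Fin n) |
        ‖y - surfaceMapCenter n F x‖ =
          Real.sqrt (‖gradient F x‖ ^ 2 - (∑ j, x j * gradient F x j) ^ 2) /
            |∑ j, x j * gradient F x j - gradient F x (Fin.last n)|} := by
  set g : EuclideanSpace ℝ (Fin (n + 1)) := gradient F x with hg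
  set c : ℝ := ∑ j, x j * g j with hc
  set gL : ℝ := g (Fin.last n) with hgL
  -- Part 1
  have hcs : |c| < ‖g‖ := by
    have h1 : c = ⟪x, g⟫ := by
      rw [hc, PiLp.inner_apply]
      simp [RCLike.inner_apply, conj_trivial]
      exact Finset.sum_congr rfl fun i _ => mul_comm _ _
    have h2 : |⟪x, g⟫| ≤ ‖x‖ * ‖g‖ := abs_real_inner_le_norm x g
    have h3 : 0 < ‖g‖ := norm_pos_iff.mpr hgrad
    rw [h1]
    calc |⟪x, g⟫| ≤ ‖x‖ * ‖g‖ := h2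
      _ < 1 * ‖g‖ := by apply mul_lt_mul_of_pos_right hx1 h3
      _ = ‖g‖ := one_mul _
  have part1 : 0 < ‖g‖ ^ 2 - c ^ 2 := by
    nlinarith [abs_nonneg c, sq_abs c]
  -- Part 2
  have part2 : northPole n ∉
      {y : EuclideanSpace ℝ (Fin (n + 1)) | ∑ j, y j * g j = c} ∩ {y | ‖y‖ = 1} := by
    rintro ⟨h1, -⟩
    apply hd
    have : ∑ j, (northPole n) j * g j = gL := by
      simp [northPole, EuclideanSpace.single_apply]
      exact hgL.symm
    rw [Set.mem_setOf_eq, this] at h1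
    rw [← h1]; ring
  refine ⟨part1, part2, ?_⟩
  -- Part 3
  ext z
  simp only [Set.mem_image, Set.mem_inter_iff, Set.mem_setOf_eq]
  have hd2 : (c - gL)^2 ≠ 0 := pow_ne_zero _ hd
  constructor
  · rintro ⟨y, ⟨hplane, hnorm⟩, rfl⟩
    set t : ℝ := y (Fin.last n) with ht
    have hy1 : ∑ i : Fin n, (y i.castSucc)^2 + t^2 = 1 := by
      have := esp_norm_sq y
      rw [hnorm] at this
      rw [← Fin.sum_univ_castSucc (fun j => (y j)^2)]
      simpa using this.symm
    have hy2 : ∑ i : Fin n, y i.castSucc * g i.castSucc + t * gL = c := by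
      rw [← Fin.sum_univ_castSucc (fun j => y j * g j)]
      exact hplane
    have hg2 : ∑ i : Fin n, (g i.castSucc)^2 + gL^2 = ‖g‖^2 := by
      rw [← Fin.sum_univ_castSucc (fun j => (g j)^2)]
      exact (esp_norm_sq g).symm
    have htne : t ≠ 1 := by
      intro h1
      have hsum0 : ∑ i : Fin n, (y i.castSucc)^2 = 0 := by
        rw [h1] at hy1; linarith
      have hzero : ∀ i : Fin n, y i.castSucc = 0 := by
        intro i
        have := (Finset.sum_eq_zero_iff_of_nonneg
          (fun i _ => sq_nonneg (y i.castSucc))).mp hsum0 i (Finset.mem_univ i)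
        exact pow_eq_zero_iff (n := 2) (by norm_num) |>.mp this
      apply hd
      have : ∑ i : Fin n, y i.castSucc * g i.castSucc = 0 :=
        Finset.sum_eq_zero fun i _ => by rw [hzero i]; ring
      rw [this, h1, zero_add, one_mul] at hy2
      rw [← hy2]; ring
    have htne' : (1 : ℝ) - t ≠ 0 := fun h => htne (by linarith)
    have hsq : ‖stereo n y - surfaceMapCenter n F x‖^2 = (‖g‖^2 - c^2)/(c - gL)^2 := by
      rw [esp_norm_sq]
      have hterm : ∀ i : Fin n, ((stereo n y - surfaceMapCenter n F x) i)^2 =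
          (y i.castSucc)^2 * (1/(1-t)^2)
          - (y i.castSucc * g i.castSucc) * (2/((1-t)*(c - gL)))
          + (g i.castSucc)^2 * (1/(c - gL)^2) := by
        intro i
        have : (stereo n y - surfaceMapCenter n F x) i
            = y i.castSucc / (1 - t) - g i.castSucc / (c - gL) := by
          simp [stereo, surfaceMapCenter, ← hg, ← hc, ← hgL, ← ht]
        rw [this]
        field_simp
        ring
      rw [Finset.sum_congr rfl fun i _ => hterm i]
      rw [Finset.sum_add_distrib, Finset.sum_sub_distrib,
        ← Finset.sum_mul, ← Finset.sum_mul, ← Finset.sum_mul]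
      have e1 : ∑ i : Fin n, (y i.castSucc)^2 = 1 - t^2 := by linarith
      have e2 : ∑ i : Fin n, y i.castSucc * g i.castSucc = c - t * gL := by linarith
      have e3 : ∑ i : Fin n, (g i.castSucc)^2 = ‖g‖^2 - gL^2 := by linarith
      rw [e1, e2, e3]
      field_simp
      ring
    rw [← Real.sqrt_sq (norm_nonneg (stereo n y - surfaceMapCenter n F x)), hsq,
      Real.sqrt_div (le_of_lt part1), Real.sqrt_sq_eq_abs]
  · intro hz
    set s : ℝ := ∑ i : Fin n, (z i)^2 with hs
    have hs0 : 0 ≤ s := Finset.sum_nonneg fun i _ => sq_nonneg _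
    have hs1 : s + 1 ≠ 0 := by positivity
    -- squared form of hz
    have hzsq : ∑ i : Fin n, (z i - g i.castSucc / (c - gL))^2 = (‖g‖^2 - c^2)/(c - gL)^2 := by
      have h1 : ‖z - surfaceMapCenter n F x‖^2
          = (Real.sqrt (‖g‖^2 - c^2) / |c - gL|)^2 := by rw [hz]
      rw [esp_norm_sq] at h1
      have h2 : (Real.sqrt (‖g‖^2 - c^2) / |c - gL|)^2 = (‖g‖^2 - c^2)/(c - gL)^2 := by
        rw [div_pow, Real.sq_sqrt (le_of_lt part1), sq_abs]
      rw [h2] at h1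
      rw [← h1]
      apply Finset.sum_congr rfl
      intro i _
      congr 1
    have hg2 : ∑ i : Fin n, (g i.castSucc)^2 + gL^2 = ‖g‖^2 := by
      rw [← Fin.sum_univ_castSucc (fun j => (g j)^2)]
      exact (esp_norm_sq g).symm
    -- key linear relation
    have hkey : 2 * (∑ i : Fin n, z i * g i.castSucc) = (c - gL) * s + c + gL := by
      have e3 : ∑ i : Fin n, (g i.castSucc)^2 = ‖g‖^2 - gL^2 := by linarith
      have h4 : (∑ i : Fin n, (z i - g i.castSucc/(c-gL))^2) * (c - gL)^2
          = ‖g‖^2 - c^2 := by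
        rw [hzsq]; field_simp
      have h5 : ∑ i : Fin n, ((z i)^2 * (c-gL)^2
          - z i * g i.castSucc * (2*(c-gL)) + (g i.castSucc)^2) = ‖g‖^2 - c^2 := by
        rw [← h4, Finset.sum_mul]
        exact Finset.sum_congr rfl fun i _ => by field_simp; ring
      rw [Finset.sum_add_distrib, Finset.sum_sub_distrib, ← Finset.sum_mul,
        ← Finset.sum_mul, e3, ← hs] at h5
      apply mul_left_cancel₀ hd
      linear_combination -h5
    -- construct the preimage point
    set y : EuclideanSpace ℝ (Fin (n + 1)) :=
      WithLp.toLp 2 (fun j : Fin (n + 1) => (Fin.lastCases ((s - 1)/(s + 1)) (fun i => 2 * z i / (s + 1)) j : ℝ)) with hy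
    have hyL : y (Fin.last n) = (s - 1)/(s + 1) := by simp [hy]
    have hyC : ∀ i : Fin n, y i.castSucc = 2 * z i / (s + 1) := by
      intro i; simp [hy]
    refine ⟨y, ⟨?_, ?_⟩, ?_⟩
    · -- plane
      rw [Fin.sum_univ_castSucc (fun j => y j * g j), hyL]
      have : ∑ i : Fin n, y i.castSucc * g i.castSucc
          = (∑ i : Fin n, z i * g i.castSucc) * (2/(s+1)) := by
        rw [Finset.sum_mul]
        exact Finset.sum_congr rfl fun i _ => by rw [hyC i]; ring
      rw [this]
      have h5 : ∑ i : Fin n, z i * g i.castSucc = ((c - gL) * s + c + gL)/2 := by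
        linarith
      rw [h5]
      field_simp
      ring
    · -- sphere
      show ‖y‖ = 1
      have hy2 : ‖y‖^2 = 1 := by
        rw [esp_norm_sq, Fin.sum_univ_castSucc (fun j => (y j)^2), hyL]
        have : ∑ i : Fin n, (y i.castSucc)^2 = s * (4/(s+1)^2) := by
          rw [hs, Finset.sum_mul]
          exact Finset.sum_congr rfl fun i _ => by rw [hyC i]; field_simp; ring
        rw [this]
        field_simp
        ring
      rw [← Real.sqrt_sq (norm_nonneg y), hy2, Real.sqrt_one]
    · -- stereo y = z
      ext i
      have h1t : 1 - y (Fin.last n) = 2/(s+1) := by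
        rw [hyL]; field_simp; ring
      show y i.castSucc / (1 - y (Fin.last n)) = z i
      rw [h1t, hyC i]
      field_simp
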